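/- Let $X \leq W_n$, $\alpha \in W_n \setminus X$, and $Y = \langle X, \alpha \rangle$. Suppose $v \in \mathbb{F}_2^{2^n}$ satisfies: (1) for every $\beta \in X$ there exists $u^{(\beta)} \in \mathrm{Fix}(\Phi(Y))$ with $\alpha(v) + \alpha\beta(v) = u^{(\beta)} + \alpha\beta(u^{(\beta)})$; and (2) $v \in \mathrm{Fix}(\Phi(Y))$. Then $v \in \mathrm{Fix}(\alpha) + \mathrm{Fix}(X)$. -/

import Mathlib

/-- Leaves of the complete rooted binary tree of depth `n`. -/
abbrev Leaf (n : ℕ) := Fin n → Bool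

/-- Two leaves agree on the first `k` levels. -/
def agree (n k : ℕ) (x y : Leaf n) : Prop := ∀ i : Fin n, (i : ℕ) < k → x i = y i

/-- The automorphism group of the depth-`n` complete rooted binary tree, realized as the
subgroup of permutations of the leaves preserving, for each `k`, agreement on the first
`k` levels. -/
def W (n : ℕ) : Subgroup (Equiv.Perm (Leaf n)) where
  carrier := {σ | ∀ (k : ℕ) (x y : Leaf n), agree n k x y ↔ agree n k (σ x) (σ y)}
  one_mem' := by intro k x y; rfl
  mul_mem' := by
    intro a b ha hb k x y
    simpa [Equiv.Perm.mul_apply] using (hb k x y).trans (ha k (b x) (b y))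
  inv_mem' := by
    intro a ha k x y
    simpa using (ha k (a⁻¹ x) (a⁻¹ y)).symm

/-- Restriction of a leaf to the first `n-1` levels. -/
def res {n : ℕ} (x : Leaf n) : Leaf (n - 1) := fun i => x (Fin.castLE (Nat.sub_le n 1) i)

/-- Extension of a depth-`n-1` vertex to a leaf. -/
def ext {n : ℕ} (p : Leaf (n - 1)) : Leaf n :=
  fun i => if h : (i : ℕ) < n - 1 then p ⟨i, h⟩ else false

lemma res_ext {n : ℕ} (p : Leaf (n - 1)) : res (ext p) = p := by
  funext i
  simp [res, ext, i.isLt]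

lemma agree_iff_res {n : ℕ} (x y : Leaf n) : agree n (n - 1) x y ↔ res x = res y := by
  constructor
  · intro h; funext i; exact h _ i.isLt
  · intro h i hi
    have h2 : Fin.castLE (Nat.sub_le n 1) (⟨(i : ℕ), hi⟩ : Fin (n - 1)) = i := by
      ext; rfl
    have := congrFun h (⟨(i : ℕ), hi⟩ : Fin (n - 1))
    simpa [res, h2] using this

/-- The natural restriction homomorphism `π_n : W_n → Aut(T_{n-1})`. -/
def treePi (n : ℕ) : (W n) →* Equiv.Perm (Leaf (n - 1)) where
  toFun σ :=
    { toFun := fun p => res ((σ : Equiv.Perm (Leaf n)) (ext p))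
      invFun := fun p => res ((σ : Equiv.Perm (Leaf n))⁻¹ (ext p))
      left_inv := by
        intro p
        have h1 : agree n (n - 1) (ext (res ((σ : Equiv.Perm (Leaf n)) (ext p))))
            ((σ : Equiv.Perm (Leaf n)) (ext p)) :=
          (agree_iff_res _ _).2 (res_ext _)
        have hinv := (W n).inv_mem σ.2
        have h2 := (hinv (n - 1) _ _).1 h1
        have h3 := (agree_iff_res _ _).1 h2
        simpa [res_ext] using h3
      right_inv := by
        intro p
        have h1 : agree n (n - 1) (ext (res ((σ : Equiv.Perm (Leaf n))⁻¹ (ext p))))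
            ((σ : Equiv.Perm (Leaf n))⁻¹ (ext p)) :=
          (agree_iff_res _ _).2 (res_ext _)
        have h2 := (σ.2 (n - 1) _ _).1 h1
        have h3 := (agree_iff_res _ _).1 h2
        simpa [res_ext] using h3 }
  map_one' := by
    refine Equiv.ext fun p => ?_
    simp [res_ext]
  map_mul' := by
    intro σ τ
    refine Equiv.ext fun p => ?_
    have h1 : agree n (n - 1) (ext (res ((τ : Equiv.Perm (Leaf n)) (ext p))))
        ((τ : Equiv.Perm (Leaf n)) (ext p)) := (agree_iff_res _ _).2 (res_ext _)
    have h2 := (σ.2 (n - 1) _ _).1 h1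
    have h3 := (agree_iff_res _ _).1 h2
    simpa using h3.symm

/-- `K_n`, the kernel of `π_n`, viewed as a subgroup of the permutations of the leaves. -/
def K (n : ℕ) : Subgroup (Equiv.Perm (Leaf n)) :=
  Subgroup.map (W n).subtype (treePi n).ker

/-- The conjugate `X^a = a⁻¹ X a` of a subgroup `X` by an element `a`. -/
def conjBy {G : Type*} [Group G] (a : G) (X : Subgroup G) : Subgroup G :=
  X.map (MulAut.conj a⁻¹).toMonoidHom

/-- `M` is a maximal subgroup of `H` (inside a common ambient group). -/
def IsMaximalIn {G : Type*} [Group G] (M H : Subgroup G) : Prop :=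
  M < H ∧ ∀ X : Subgroup G, M < X → X ≤ H → X = H

/-- The Frattini subgroup of `H`: the intersection of all maximal subgroups of `H`. -/
def frattiniIn {G : Type*} [Group G] (H : Subgroup G) : Subgroup G :=
  H ⊓ sInf {M | IsMaximalIn M H}


theorem Equiv.Perm.inv_apply_self {α : Type*} (f : Equiv.Perm α) (x : α) : f⁻¹ (f x) = x :=
  f.symm_apply_apply x

theorem Equiv.Perm.apply_inv_self {α : Type*} (f : Equiv.Perm α) (x : α) : f (f⁻¹ x) = x :=
  f.apply_symm_apply x

section AuxTree

lemma agree_res_of {n k : ℕ} {x y : Leaf (n+1)} (h : agree (n+1) k x y) :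
    agree n k (res x) (res y) := by
  intro i hi
  exact h (Fin.castLE (Nat.sub_le (n+1) 1) i) hi

lemma agree_of_res {n k : ℕ} (hk : k ≤ n) {x y : Leaf (n+1)}
    (h : agree n k (res x) (res y)) : agree (n+1) k x y := by
  intro i hi
  have hin : (i : ℕ) < n := lt_of_lt_of_le hi hk
  have := h ⟨(i : ℕ), hin⟩ hi
  simpa [res, Fin.castLE] using this

lemma treePi_mem_W {n : ℕ} (σ : ↥(W (n+1))) : (treePi (n+1) σ : Equiv.Perm (Leaf n)) ∈ W n := by
  intro k p q
  rcases le_or_gt k n with hk | hk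
  · have e1 : agree n k p q ↔ agree (n+1) k (ext p) (ext q) := by
      constructor
      · intro h
        exact agree_of_res hk (by simpa [res_ext] using h)
      · intro h
        simpa [res_ext] using agree_res_of h
    have e2 := σ.2 k (ext p) (ext q)
    have e3 : agree (n+1) k ((σ : Equiv.Perm (Leaf (n+1))) (ext p))
        ((σ : Equiv.Perm (Leaf (n+1))) (ext q)) ↔
        agree n k (treePi (n+1) σ p) (treePi (n+1) σ q) := by
      constructor
      · intro h; exact agree_res_of h
      · intro h; exact agree_of_res hk h
    exact (e1.trans e2).trans e3
  · have all : ∀ (a b : Leaf n), agree n k a b ↔ a = b := by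
      intro a b
      constructor
      · intro h; funext i; exact h i (lt_of_lt_of_le i.isLt hk.le)
      · rintro rfl i _; rfl
    rw [all, all]
    exact ⟨fun h => by rw [h], fun h => (treePi (n+1) σ).injective h⟩

lemma res_apply_eq {n : ℕ} (σ : ↥(W (n+1))) (h : treePi (n+1) σ = 1) (x : Leaf (n+1)) :
    res ((σ : Equiv.Perm (Leaf (n+1))) x) = res x := by
  have h1 : agree (n+1) n x (ext (res x)) := by
    refine agree_of_res le_rfl ?_
    rw [res_ext]
    exact fun i _ => rfl
  have h2 := (σ.2 n x (ext (res x))).1 h1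
  have h3 : res ((σ : Equiv.Perm (Leaf (n+1))) x)
      = res ((σ : Equiv.Perm (Leaf (n+1))) (ext (res x))) := by
    funext i
    exact agree_res_of h2 i i.isLt
  rw [h3]
  have h4 := congrArg (fun e : Equiv.Perm (Leaf n) => e (res x)) h
  simpa [treePi] using h4

lemma fiber_two {n : ℕ} {x y w : Leaf (n+1)} (hxy : res x = res y) (hne : x ≠ y)
    (hw : res w = res x) : w = x ∨ w = y := by
  have key : ∀ {a b : Leaf (n+1)}, res a = res b → a (Fin.last n) = b (Fin.last n) → a = b := by
    intro a b hr hl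
    funext i
    rcases lt_or_eq_of_le (Nat.lt_succ_iff.mp i.isLt) with hi | hi
    · have := congrFun hr ⟨(i : ℕ), hi⟩
      simpa [res, Fin.castLE, Fin.ext_iff] using this
    · have : i = Fin.last n := by ext; exact hi
      rw [this]; exact hl
  have hxyl : x (Fin.last n) ≠ y (Fin.last n) := fun h => hne (key hxy h)
  have bcase : ∀ b c d : Bool, b ≠ c → d = b ∨ d = c := by decide
  rcases bcase _ _ (w (Fin.last n)) hxyl with h | h
  · exact Or.inl (key hw h)
  · exact Or.inr (key (hw.trans hxy) h)

lemma ker_sq {n : ℕ} (σ : ↥(W (n+1))) (h : treePi (n+1) σ = 1) :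
    (σ : Equiv.Perm (Leaf (n+1))) * σ = 1 := by
  set π : Equiv.Perm (Leaf (n+1)) := (σ : Equiv.Perm (Leaf (n+1)))
  refine Equiv.ext fun x => ?_
  simp only [Equiv.Perm.mul_apply, Equiv.Perm.one_apply]
  by_cases hx : π x = x
  · rw [hx, hx]
  · have h1 : res (π x) = res x := res_apply_eq σ h x
    have h2 : res (π (π x)) = res x := by rw [res_apply_eq σ h (π x), h1]
    rcases fiber_two h1.symm (Ne.symm hx) h2 with h3 | h3
    · exact h3
    · exact absurd (π.injective h3) hx

lemma Wexp : ∀ (n : ℕ) (σ : Equiv.Perm (Leaf n)), σ ∈ W n → σ ^ (2 ^ n) = 1 := by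
  intro n
  induction n with
  | zero =>
    intro σ _
    haveI : Subsingleton (Leaf 0) := ⟨fun a b => funext fun i => absurd i.isLt (by simp)⟩
    have : σ = 1 := Equiv.ext fun x => Subsingleton.elim _ _
    simp [this]
  | succ n ih =>
    intro σ hσ
    set g : ↥(W (n+1)) := ⟨σ, hσ⟩
    have hk : treePi (n+1) (g ^ (2 ^ n)) = 1 := by
      rw [map_pow]
      exact ih _ (treePi_mem_W g)
    have hsq := ker_sq (g ^ (2 ^ n)) hk
    have : σ ^ (2 ^ (n+1)) = (σ ^ (2 ^ n)) * (σ ^ (2 ^ n)) := by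
      rw [← pow_add]
      congr 1
      omega
    rw [this]
    simpa using hsq

end AuxTree

section AuxGroup

variable {G : Type*} [Group G]

lemma isCoatom_subgroupOf {M Y : Subgroup G} (hM : IsMaximalIn M Y) :
    IsCoatom (M.subgroupOf Y) := by
  obtain ⟨hlt, hmax⟩ := hM
  constructor
  · intro htop
    obtain ⟨y, hyY, hyM⟩ := SetLike.exists_of_lt hlt
    have : (⟨y, hyY⟩ : ↥Y) ∈ M.subgroupOf Y := htop ▸ Subgroup.mem_top _
    exact hyM (by simpa [Subgroup.mem_subgroupOf] using this)
  · intro K' hK'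
    have hMK : M ≤ K'.map Y.subtype := by
      intro m hm
      have hmY : m ∈ Y := hlt.le hm
      exact ⟨⟨m, hmY⟩, hK'.le (by simpa [Subgroup.mem_subgroupOf] using hm), rfl⟩
    have hne : M ≠ K'.map Y.subtype := by
      intro he
      obtain ⟨k, hk, hkM⟩ := SetLike.exists_of_lt hK'
      exact hkM (by
        have : (k : G) ∈ M := he ▸ ⟨k, hk, rfl⟩
        simpa [Subgroup.mem_subgroupOf] using this)
    have heq := hmax (K'.map Y.subtype) (lt_of_le_of_ne hMK hne)
      (Subgroup.map_subtype_le K')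
    have htop : (⊤ : Subgroup ↥Y).map Y.subtype = Y := by
      apply le_antisymm (Subgroup.map_subtype_le _)
      intro y hy; exact ⟨⟨y, hy⟩, Subgroup.mem_top _, rfl⟩
    exact Subgroup.map_injective Y.subtype_injective (heq.trans htop.symm)

lemma max_abelian_sq {Y : Subgroup G} [Finite ↥Y] (hp : IsPGroup 2 ↥Y)
    {M : Subgroup G} (hM : IsMaximalIn M Y) :
    (∀ a b : ↥Y, (↑(a*b*a⁻¹*b⁻¹) : G) ∈ M) ∧ (∀ a : ↥Y, (↑(a*a) : G) ∈ M) := by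
  classical
  haveI : Fact (Nat.Prime 2) := ⟨Nat.prime_two⟩
  haveI : Group.IsNilpotent ↥Y := hp.isNilpotent
  set M' := M.subgroupOf Y with hM'def
  have hco : IsCoatom M' := isCoatom_subgroupOf hM
  have hnorm : M'.Normal :=
    Subgroup.NormalizerCondition.normal_of_coatom M' normalizerCondition_of_isNilpotent hco
  have hbt : ∀ H : Subgroup (↥Y ⧸ M'), H = ⊥ ∨ H = ⊤ := by
    intro H
    have hle : M' ≤ H.comap (QuotientGroup.mk' M') := by
      intro m hm
      have h1 : QuotientGroup.mk' M' m = 1 := by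
        simpa using (QuotientGroup.eq_one_iff m).2 hm
      simp only [Subgroup.mem_comap, h1]
      exact H.one_mem
    rcases eq_or_lt_of_le hle with he | hlt
    · left
      have : H = (H.comap (QuotientGroup.mk' M')).map (QuotientGroup.mk' M') :=
        (Subgroup.map_comap_eq_self_of_surjective (QuotientGroup.mk'_surjective M') H).symm
      rw [this, ← he]
      apply le_antisymm
      · intro q hq
        obtain ⟨m, hm, rfl⟩ := hq
        simpa using (QuotientGroup.eq_one_iff m).2 hm
      · exact bot_le
    · right
      have := hco.2 _ hlt
      have : H = ((⊤ : Subgroup ↥Y)).map (QuotientGroup.mk' M') := by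
        rw [← this]
        exact (Subgroup.map_comap_eq_self_of_surjective (QuotientGroup.mk'_surjective M') H).symm
      rw [this]
      exact Subgroup.map_top_of_surjective _ (QuotientGroup.mk'_surjective M')
  -- quotient is abelian of exponent 2
  have key : ∀ q : ↥Y ⧸ M', q * q = 1 := by
    by_cases htriv : ∀ q : ↥Y ⧸ M', q = 1
    · intro q; rw [htriv q]; simp
    · push_neg at htriv
      obtain ⟨g, hg⟩ := htriv
      have hQp : IsPGroup 2 (↥Y ⧸ M') := hp.to_quotient M'
      obtain ⟨k, hk⟩ := hQp g
      -- minimal k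
      have hex : ∃ k, g ^ (2:ℕ) ^ k = 1 := ⟨k, hk⟩
      set k0 := Nat.find hex with hk0
      have hk0pos : 0 < k0 := by
        rcases Nat.eq_zero_or_pos k0 with h0 | h0
        · exfalso; apply hg; have := Nat.find_spec hex; rw [← hk0, h0] at this; simpa using this
        · exact h0
      set h := g ^ (2:ℕ) ^ (k0 - 1) with hh
      have hhne : h ≠ 1 := by
        intro he
        exact Nat.find_min hex (Nat.sub_lt hk0pos one_pos) he
      have hh2 : h * h = 1 := by
        have e : 2 ^ (k0 - 1) + 2 ^ (k0 - 1) = 2 ^ k0 := by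
          have h1 : k0 - 1 + 1 = k0 := Nat.succ_pred_eq_of_pos hk0pos
          calc 2 ^ (k0-1) + 2 ^ (k0-1) = 2 ^ (k0-1) * 2 := by ring
            _ = 2 ^ (k0-1+1) := (pow_succ 2 (k0-1)).symm
            _ = 2 ^ k0 := by rw [h1]
        rw [hh, ← pow_add, e]
        exact Nat.find_spec hex
      have hzp : Subgroup.zpowers h = ⊤ := by
        rcases hbt (Subgroup.zpowers h) with hb | ht
        · exfalso
          exact hhne (by
            have : h ∈ Subgroup.zpowers h := Subgroup.mem_zpowers h
            rw [hb] at this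
            simpa using this)
        · exact ht
      intro q
      have hq : q ∈ Subgroup.zpowers h := hzp ▸ Subgroup.mem_top q
      obtain ⟨m, rfl⟩ := hq
      rw [← (Commute.refl h).mul_zpow, hh2, one_zpow]
  have hinv : ∀ x : ↥Y ⧸ M', x⁻¹ = x := fun x => inv_eq_of_mul_eq_one_right (key x)
  have comm : ∀ x y : ↥Y ⧸ M', x * y = y * x := by
    intro x y
    have h1 : x * y = (x * y)⁻¹ := (inv_eq_of_mul_eq_one_right (key (x*y))).symm
    rw [h1, mul_inv_rev, hinv, hinv]
  constructor
  · intro a b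
    have hq : ((a*b*a⁻¹*b⁻¹ : ↥Y) : ↥Y ⧸ M') = 1 := by
      rw [QuotientGroup.mk_mul, QuotientGroup.mk_mul, QuotientGroup.mk_mul,
        QuotientGroup.mk_inv, QuotientGroup.mk_inv]
      rw [comm ((a : ↥Y ⧸ M')) ((b : ↥Y ⧸ M'))]
      group
    have : (a*b*a⁻¹*b⁻¹ : ↥Y) ∈ M' := (QuotientGroup.eq_one_iff _).1 hq
    simpa [hM'def, Subgroup.mem_subgroupOf] using this
  · intro a
    have hq : ((a*a : ↥Y) : ↥Y ⧸ M') = 1 := by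
      rw [QuotientGroup.mk_mul]
      exact key _
    have : (a*a : ↥Y) ∈ M' := (QuotientGroup.eq_one_iff _).1 hq
    simpa [hM'def, Subgroup.mem_subgroupOf] using this

lemma comm_mem_frattiniIn {Y : Subgroup G} [Finite ↥Y] (hp : IsPGroup 2 ↥Y)
    {y z : G} (hy : y ∈ Y) (hz : z ∈ Y) : y * z * y⁻¹ * z⁻¹ ∈ frattiniIn Y := by
  refine Subgroup.mem_inf.2 ⟨mul_mem (mul_mem (mul_mem hy hz) (Y.inv_mem hy)) (Y.inv_mem hz), ?_⟩
  refine Subgroup.mem_sInf.2 fun M hM => ?_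
  have := (max_abelian_sq hp hM).1 ⟨y, hy⟩ ⟨z, hz⟩
  simpa using this

lemma sq_mem_frattiniIn {Y : Subgroup G} [Finite ↥Y] (hp : IsPGroup 2 ↥Y)
    {y : G} (hy : y ∈ Y) : y * y ∈ frattiniIn Y := by
  refine Subgroup.mem_inf.2 ⟨mul_mem hy hy, ?_⟩
  refine Subgroup.mem_sInf.2 fun M hM => ?_
  have := (max_abelian_sq hp hM).2 ⟨y, hy⟩
  simpa using this

lemma exists_maximalIn [Finite G] {X Y : Subgroup G} (hXY : X ≤ Y) (hne : X ≠ Y) :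
    ∃ M, IsMaximalIn M Y ∧ X ≤ M := by
  haveI : Finite (Subgroup G) := Finite.of_injective _ SetLike.coe_injective
  have hS : ({H | X ≤ H ∧ H < Y} : Set (Subgroup G)).Finite := Set.toFinite _
  have hne' : ({H | X ≤ H ∧ H < Y} : Set (Subgroup G)).Nonempty :=
    ⟨X, le_refl X, lt_of_le_of_ne hXY hne⟩
  obtain ⟨M, hMS, hMmax⟩ : ∃ M ∈ ({H | X ≤ H ∧ H < Y} : Set (Subgroup G)),
      ∀ K ∈ ({H | X ≤ H ∧ H < Y} : Set (Subgroup G)), M ≤ K → M = K := by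
    obtain ⟨M, hM⟩ := hS.exists_maximal hne'
    exact ⟨M, hM.1, fun K hK hle => hM.eq_of_le hK hle⟩
  refine ⟨M, ⟨hMS.2, ?_⟩, hMS.1⟩
  intro K hMK hKY
  by_contra hKne
  have hKS : K ∈ ({H | X ≤ H ∧ H < Y} : Set (Subgroup G)) :=
    ⟨hMS.1.trans hMK.le, lt_of_le_of_ne hKY hKne⟩
  exact hMK.ne (hMmax K hKS hMK.le)

lemma alpha_not_mem_Z [Finite G] {X Y : Subgroup G} (hXY : X ≤ Y) {α : G}
    (hαX : α ∉ X) (hgen : X ⊔ Subgroup.closure {α} = Y) :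
    α ∉ X ⊔ frattiniIn Y := by
  intro hαZ
  have hΦY : frattiniIn Y ≤ Y := inf_le_left
  have hZY : X ⊔ frattiniIn Y ≤ Y := sup_le hXY hΦY
  have hYZ : Y ≤ X ⊔ frattiniIn Y := by
    have h1 : Subgroup.closure {α} ≤ X ⊔ frattiniIn Y :=
      (Subgroup.closure_le _).2 (by simpa using hαZ)
    have h2 := sup_le (le_sup_left : X ≤ X ⊔ frattiniIn Y) h1
    rwa [hgen] at h2
  have hαY : α ∈ Y := by
    rw [← hgen]
    exact Subgroup.mem_sup_right (Subgroup.mem_closure_singleton_self α)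
  have hXne : X ≠ Y := fun he => hαX (by rw [he]; exact hαY)
  obtain ⟨M, hM, hXM⟩ := exists_maximalIn hXY hXne
  have : Y ≤ M := by
    calc Y ≤ X ⊔ frattiniIn Y := hYZ
      _ ≤ M ⊔ M := sup_le_sup hXM ((inf_le_right).trans (sInf_le hM))
      _ = M := sup_idem M
  exact lt_irrefl M (lt_of_lt_of_le hM.1 this)



end AuxGroup

/-- Proposition 5.4: if `v ∈ Fix(Φ(Y))` and, for each `β ∈ X`, there is
`u⁽ᵝ⁾ ∈ Fix(Φ(Y))` with `α(v) + αβ(v) = u⁽ᵝ⁾ + αβ(u⁽ᵝ⁾)`, then `v ∈ Fix(α) + Fix(X)`. -/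
theorem stmt14 (n : ℕ) (X : Subgroup (Equiv.Perm (Leaf n))) (hX : X ≤ W n)
    (α : Equiv.Perm (Leaf n)) (hαW : α ∈ W n) (hαX : α ∉ X)
    (Y : Subgroup (Equiv.Perm (Leaf n))) (hY : Y = X ⊔ Subgroup.closure {α})
    (v : Leaf n → ZMod 2)
    (h1 : ∀ β ∈ X, ∃ u : Leaf n → ZMod 2, (∀ γ ∈ frattiniIn Y, ∀ i, u (γ i) = u i) ∧
      ∀ i, v (α⁻¹ i) + v ((α * β)⁻¹ i) = u i + u ((α * β)⁻¹ i))
    (h2 : ∀ γ ∈ frattiniIn Y, ∀ i, v (γ i) = v i) :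
    ∃ v₁ v₂ : Leaf n → ZMod 2, v = v₁ + v₂ ∧ (∀ i, v₁ (α i) = v₁ i) ∧
      ∀ β ∈ X, ∀ i, v₂ (β i) = v₂ i := by
  classical
  have hXY : X ≤ Y := hY ▸ le_sup_left
  have hαY : α ∈ Y := by
    rw [hY]; exact Subgroup.mem_sup_right (Subgroup.mem_closure_singleton_self α)
  have hYW : Y ≤ W n := by
    rw [hY]
    exact sup_le hX ((Subgroup.closure_le _).2 (by simpa using hαW))
  have hp : IsPGroup 2 ↥Y := by
    intro g
    refine ⟨n, Subtype.ext ?_⟩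
    have h := Wexp n (g : Equiv.Perm (Leaf n)) (hYW g.2)
    push_cast
    exact h
  have hΦY : frattiniIn Y ≤ Y := inf_le_left
  have hcomm : ∀ y ∈ Y, ∀ z ∈ Y, y * z * y⁻¹ * z⁻¹ ∈ frattiniIn Y :=
    fun y hy z hz => comm_mem_frattiniIn hp hy hz
  have hsq2 : ∀ y ∈ Y, y * y ∈ frattiniIn Y := fun y hy => sq_mem_frattiniIn hp hy
  have hNΦ : ∀ y ∈ Y, ∀ γ ∈ frattiniIn Y, y * γ * y⁻¹ ∈ frattiniIn Y := by
    intro y hy γ hγ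
    have h1 := hcomm y hy γ (hΦY hγ)
    have h2 : y * γ * y⁻¹ = y * γ * y⁻¹ * γ⁻¹ * γ := by group
    rw [h2]; exact mul_mem h1 hγ
  set Z := X ⊔ frattiniIn Y with hZdef
  have hXZ : X ≤ Z := le_sup_left
  have hΦZ : frattiniIn Y ≤ Z := le_sup_right
  have hZY : Z ≤ Y := sup_le hXY hΦY
  have hNZ : ∀ y ∈ Y, ∀ z ∈ Z, y * z * y⁻¹ ∈ Z := by
    intro y hy z hz
    have h1 := hcomm y hy z (hZY hz)
    have h2 : y * z * y⁻¹ = y * z * y⁻¹ * z⁻¹ * z := by group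
    rw [h2]; exact mul_mem (hΦZ h1) hz
  have hαZ : α ∉ Z := alpha_not_mem_Z hXY hαX hY.symm
  have hα2 : α * α ∈ frattiniIn Y := hsq2 α hαY
  have hvΦ : ∀ γ ∈ frattiniIn Y, ∀ i, v (γ i) = v i := h2
  have hYc : Subgroup.closure ((X : Set (Equiv.Perm (Leaf n))) ∪ {α}) = Y := by
    rw [Subgroup.closure_union, Subgroup.closure_eq, hY]
  -- every element of Y is in Z or Z·α
  have decD : ∀ y ∈ Y, y ∈ Z ∨ ∃ z ∈ Z, y = z * α := by
    intro y hy
    rw [← hYc] at hy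
    induction hy using Subgroup.closure_induction with
    | mem x hx =>
      rcases hx with hx | hx
      · exact Or.inl (hXZ hx)
      · exact Or.inr ⟨1, Z.one_mem, by simp [Set.mem_singleton_iff.1 hx]⟩
    | one => exact Or.inl Z.one_mem
    | mul x y hx hy ihx ihy =>
      have hyY : y ∈ Y := hYc ▸ hy
      rcases ihx with hxZ | ⟨z1, hz1, rfl⟩
      · rcases ihy with hyZ | ⟨z2, hz2, rfl⟩
        · exact Or.inl (mul_mem hxZ hyZ)
        · exact Or.inr ⟨x * z2, mul_mem hxZ hz2, by group⟩
      · rcases ihy with hyZ | ⟨z2, hz2, rfl⟩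
        · exact Or.inr ⟨z1 * (α * y * α⁻¹), mul_mem hz1 (hNZ α hαY y hyZ), by group⟩
        · refine Or.inl ?_
          have he : z1 * α * (z2 * α) = z1 * (α * z2 * α⁻¹) * (α * α) := by group
          rw [he]
          exact mul_mem (mul_mem hz1 (hNZ α hαY z2 hz2)) (hΦZ hα2)
    | inv x hx ihx =>
      rcases ihx with hxZ | ⟨z1, hz1, rfl⟩
      · exact Or.inl (inv_mem hxZ)
      · refine Or.inr ⟨(α⁻¹ * z1⁻¹ * α) * (α * α)⁻¹, ?_, by group⟩
        have h1 := hNZ α⁻¹ (inv_mem hαY) z1⁻¹ (inv_mem hz1)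
        rw [inv_inv] at h1
        exact mul_mem h1 (inv_mem (hΦZ hα2))
  -- every element of Z is a product β·γ
  have hZc : Subgroup.closure ((X : Set (Equiv.Perm (Leaf n)))
      ∪ (frattiniIn Y : Set (Equiv.Perm (Leaf n)))) = Z := by
    rw [Subgroup.closure_union, Subgroup.closure_eq, Subgroup.closure_eq]
  have decZ : ∀ z ∈ Z, ∃ β ∈ X, ∃ γ ∈ frattiniIn Y, z = β * γ := by
    intro z hz
    rw [← hZc] at hz
    induction hz using Subgroup.closure_induction with
    | mem x hx =>
      rcases hx with hx | hx
      · exact ⟨x, hx, 1, one_mem _, by simp⟩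
      · exact ⟨1, X.one_mem, x, hx, by simp⟩
    | one => exact ⟨1, X.one_mem, 1, one_mem _, by simp⟩
    | mul a b ha hb iha ihb =>
      obtain ⟨β₁, hβ₁, γ₁, hγ₁, rfl⟩ := iha
      obtain ⟨β₂, hβ₂, γ₂, hγ₂, rfl⟩ := ihb
      refine ⟨β₁ * β₂, mul_mem hβ₁ hβ₂, (β₂⁻¹ * γ₁ * β₂) * γ₂, ?_, by group⟩
      have h1 := hNΦ β₂⁻¹ (inv_mem (hXY hβ₂)) γ₁ hγ₁
      rw [inv_inv] at h1
      exact mul_mem h1 hγ₂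
    | inv a ha iha =>
      obtain ⟨β₁, hβ₁, γ₁, hγ₁, rfl⟩ := iha
      exact ⟨β₁⁻¹, inv_mem hβ₁, β₁ * γ₁⁻¹ * β₁⁻¹,
        hNΦ β₁ (hXY hβ₁) γ₁⁻¹ (inv_mem hγ₁), by group⟩
  -- Claim A : i ↦ v (α i) + v i is Y-invariant
  have claimA : ∀ y ∈ Y, ∀ i, v (α (y i)) + v (y i) = v (α i) + v i := by
    have base : ∀ β ∈ X, ∀ i, v (α (β i)) + v (β i) = v (α i) + v i := by
      intro β hβ i
      obtain ⟨u, hu, hE⟩ := h1 β hβ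
      have hE' : v (β i) + v i = u (α (β i)) + u i := by
        have := hE ((α * β) i)
        simpa [Equiv.Perm.mul_apply, mul_inv_rev] using this
      have hαβY : α * β ∈ Y := mul_mem hαY (hXY hβ)
      have hu2 : u (α (β (α (β i)))) = u i := by
        have := hu _ (hsq2 _ hαβY) i
        simpa [Equiv.Perm.mul_apply] using this
      have hE'' : v (β (α (β i))) + v (α (β i)) = u i + u (α (β i)) := by
        have h0 := hE ((α * β) ((α * β) i))
        simp only [Equiv.Perm.mul_apply, mul_inv_rev, Equiv.Perm.inv_apply_self] at h0
        rw [hu2] at h0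
        exact h0
      have hγ : α⁻¹ * β * α * β ∈ frattiniIn Y := by
        have hc := hcomm α⁻¹ (inv_mem hαY) β (hXY hβ)
        rw [inv_inv] at hc
        have he : α⁻¹ * β * α * β = (α⁻¹ * β * α * β⁻¹) * (β * β) := by group
        rw [he]
        exact mul_mem hc (hsq2 β (hXY hβ))
      have hδ : α * (α⁻¹ * β * α * β) * α⁻¹ ∈ frattiniIn Y := hNΦ α hαY _ hγ
      have h3 : v (β (α (β i))) = v (α i) := by
        have happ : β (α (β i)) = (α * (α⁻¹ * β * α * β) * α⁻¹) (α i) := by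
          have hid : β * α * β = (α * (α⁻¹ * β * α * β) * α⁻¹) * α := by group
          have := congrArg (fun (e : Equiv.Perm (Leaf n)) => e i) hid
          simp only [Equiv.Perm.mul_apply] at this
          exact this
        rw [happ]
        exact hvΦ _ hδ (α i)
      exact (by decide : ∀ a b c d e f g : ZMod 2,
        a + b = c + d → e + f = d + c → e = g → f + a = g + b) _ _ _ _ _ _ _ hE' hE'' h3
    intro y hy
    rw [← hYc] at hy
    induction hy using Subgroup.closure_induction with
    | mem x hx =>
      rcases hx with hx | hx
      · exact base x hx
      · intro i
        rw [Set.mem_singleton_iff.1 hx]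
        have : v (α (α i)) = v i := by
          have := hvΦ _ hα2 i
          simpa [Equiv.Perm.mul_apply] using this
        rw [this, add_comm]
    | one => intro i; simp
    | mul x y hx hy ihx ihy =>
      intro i
      simp only [Equiv.Perm.mul_apply]
      rw [ihx (y i), ihy i]
    | inv x hx ihx =>
      intro i
      have := ihx (x⁻¹ i)
      rw [Equiv.Perm.apply_inv_self] at this
      exact this.symm
  -- Claim 1 : on orbits meeting condition P, v is α-invariant
  have claim1 : ∀ i₀, (∃ z ∈ Z, z i₀ = α i₀) → ∀ j, (∃ y ∈ Y, y i₀ = j) → v (α j) = v j := by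
    rintro i₀ ⟨z, hz, hzi⟩ j ⟨y, hyY, hyj⟩
    obtain ⟨β₀, hβ₀, γ₀, hγ₀, rfl⟩ := decZ z hz
    obtain ⟨u, hu, hE⟩ := h1 β₀⁻¹ (inv_mem hβ₀)
    have hβY : (β₀⁻¹ : Equiv.Perm (Leaf n)) ∈ Y := hXY (inv_mem hβ₀)
    have hαβY : α * β₀⁻¹ ∈ Y := mul_mem hαY hβY
    -- step 1 : (α * β₀⁻¹) i₀ = δ i₀ with δ ∈ Φ
    have hc : β₀ * α⁻¹ * β₀⁻¹ * α ∈ frattiniIn Y := by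
      have := hcomm β₀ (hXY hβ₀) α⁻¹ (inv_mem hαY)
      rwa [inv_inv] at this
    have hc' : (α * β₀⁻¹) * (β₀ * α⁻¹ * β₀⁻¹ * α) * (α * β₀⁻¹)⁻¹ ∈ frattiniIn Y :=
      hNΦ _ hαβY _ hc
    set c' := (α * β₀⁻¹) * (β₀ * α⁻¹ * β₀⁻¹ * α) * (α * β₀⁻¹)⁻¹ with hc'def
    have hδΦ : c'⁻¹ * γ₀ ∈ frattiniIn Y := mul_mem (inv_mem hc') hγ₀
    have hstep1 : (α * β₀⁻¹) i₀ = (c'⁻¹ * γ₀) i₀ := by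
      have hδid : α * β₀⁻¹ = c'⁻¹ * (β₀⁻¹ * α) := by rw [hc'def]; group
      rw [hδid]
      have hz' : β₀ (γ₀ i₀) = α i₀ := by
        have := hzi
        simpa [Equiv.Perm.mul_apply] using this
      simp only [Equiv.Perm.mul_apply]
      congr 1
      rw [← hz', Equiv.Perm.inv_apply_self]
    -- on the whole orbit, (α*β₀⁻¹) and β₀⁻¹ fix v
    have hAB : ∀ y' ∈ Y, v (α (β₀⁻¹ (y' i₀))) = v (y' i₀) ∧ v (β₀⁻¹ (y' i₀)) = v (y' i₀) := by
      intro y' hy'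
      have he : (α * β₀⁻¹)⁻¹ * y'⁻¹ * (α * β₀⁻¹) * y' ∈ frattiniIn Y := by
        have := hcomm (α * β₀⁻¹)⁻¹ (inv_mem hαβY) y'⁻¹ (inv_mem hy')
        rwa [inv_inv, inv_inv] at this
      have he'' : (α * β₀⁻¹) * ((α * β₀⁻¹)⁻¹ * y'⁻¹ * (α * β₀⁻¹) * y') * (α * β₀⁻¹)⁻¹
          ∈ frattiniIn Y := hNΦ _ hαβY _ he
      set φ := y' * ((α * β₀⁻¹) * ((α * β₀⁻¹)⁻¹ * y'⁻¹ * (α * β₀⁻¹) * y') * (α * β₀⁻¹)⁻¹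
        * (c'⁻¹ * γ₀)) * y'⁻¹ with hφdef
      have hφΦ : φ ∈ frattiniIn Y := hNΦ y' hy' _ (mul_mem he'' hδΦ)
      have hkey : α (β₀⁻¹ (y' i₀)) = φ (y' i₀) := by
        have hgid : (α * β₀⁻¹) * y' = (y' * ((α * β₀⁻¹) * ((α * β₀⁻¹)⁻¹ * y'⁻¹ * (α * β₀⁻¹) * y')
            * (α * β₀⁻¹)⁻¹)) * (α * β₀⁻¹) := by group
        have h1' := congrArg (fun (e : Equiv.Perm (Leaf n)) => e i₀) hgid
        simp only [Equiv.Perm.mul_apply] at h1' ⊢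
        rw [h1']
        have h2' := hstep1
        simp only [Equiv.Perm.mul_apply] at h2'
        rw [h2']
        rw [hφdef]
        simp only [Equiv.Perm.mul_apply]
        rw [Equiv.Perm.inv_apply_self]
      constructor
      · rw [hkey]
        exact hvΦ φ hφΦ (y' i₀)
      · -- use hE at the point (α * β₀⁻¹) (y' i₀)
        have hEy : v (β₀⁻¹ (y' i₀)) + v (y' i₀) = u (α (β₀⁻¹ (y' i₀))) + u (y' i₀) := by
          have := hE ((α * β₀⁻¹) (y' i₀))
          simpa [Equiv.Perm.mul_apply, mul_inv_rev] using this
        rw [hkey, hu φ hφΦ] at hEy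
        exact (by decide : ∀ a b c : ZMod 2, a + b = c + c → a = b) _ _ _ hEy
    have h2a := hAB (β₀ * y) (mul_mem (hXY hβ₀) hyY)
    have ht : (β₀ * y) i₀ = β₀ j := by
      rw [Equiv.Perm.mul_apply, hyj]
    rw [ht, Equiv.Perm.inv_apply_self] at h2a
    exact h2a.1.trans h2a.2.symm
  -- orbit representatives
  let s : Setoid (Leaf n) := ⟨fun i j => ∃ y ∈ Y, y i = j,
    ⟨fun i => ⟨1, Y.one_mem, rfl⟩,
     fun {i j} h => by
       obtain ⟨y, hy, hyij⟩ := h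
       exact ⟨y⁻¹, inv_mem hy, by rw [← hyij, Equiv.Perm.inv_apply_self]⟩,
     fun {i j k} h h' => by
       obtain ⟨y, hy, hij⟩ := h
       obtain ⟨z, hz, hjk⟩ := h'
       exact ⟨z * y, mul_mem hz hy, by rw [Equiv.Perm.mul_apply, hij, hjk]⟩⟩⟩
  let r : Leaf n → Leaf n := fun i => (Quotient.mk s i).out
  have hr_rel : ∀ i, ∃ y ∈ Y, y (r i) = i := fun i =>
    Quotient.exact (Quotient.out_eq (Quotient.mk s i))
  have hr_eq : ∀ y ∈ Y, ∀ i, r (y i) = r i := fun y hy i =>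
    congrArg Quotient.out (Quotient.sound ⟨y⁻¹, inv_mem hy, Equiv.Perm.inv_apply_self y i⟩)
  let cc : Leaf n → ZMod 2 := fun i =>
    if ∃ z ∈ Z, z (r i) = i then 0 else v (r i) + v (α (r i))
  have hcc : cc = fun i =>
      (if ∃ z ∈ Z, z (r i) = i then 0 else v (r i) + v (α (r i))) := rfl
  refine ⟨fun i => v i + cc i, cc, ?_, ?_, ?_⟩
  · funext i
    simp only [Pi.add_apply]
    exact (by decide : ∀ a b : ZMod 2, a = a + b + b) _ _
  · -- α-invariance of v₁
    intro i
    simp only [hcc]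
    have hrr : r (α i) = r i := hr_eq α hαY i
    obtain ⟨y, hyY, hyi⟩ := hr_rel i
    rw [hrr]
    by_cases hP : ∃ z ∈ Z, z (r i) = α (r i)
    · have hci : ∃ z ∈ Z, z (r i) = i := by
        rcases decD y hyY with hyZ | ⟨z, hz, rfl⟩
        · exact ⟨y, hyZ, hyi⟩
        · obtain ⟨z₀, hz₀, hz₀i⟩ := hP
          refine ⟨z * z₀, mul_mem hz hz₀, ?_⟩
          rw [Equiv.Perm.mul_apply, hz₀i]
          rw [Equiv.Perm.mul_apply] at hyi
          exact hyi
      have hcαi : ∃ z ∈ Z, z (r i) = α i := by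
        rcases decD (α * y) (mul_mem hαY hyY) with hZ | ⟨z, hz, heq⟩
        · exact ⟨α * y, hZ, by rw [Equiv.Perm.mul_apply, hyi]⟩
        · obtain ⟨z₀, hz₀, hz₀i⟩ := hP
          refine ⟨z * z₀, mul_mem hz hz₀, ?_⟩
          have h5 := congrArg (fun (e : Equiv.Perm (Leaf n)) => e (r i)) heq
          simp only [Equiv.Perm.mul_apply] at h5 ⊢
          rw [hz₀i, ← h5, hyi]
      rw [if_pos hci, if_pos hcαi, add_zero, add_zero]
      exact claim1 (r i) hP i ⟨y, hyY, hyi⟩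
    · have hwA := claimA y hyY (r i)
      rw [hyi] at hwA
      by_cases hci : ∃ z ∈ Z, z (r i) = i
      · have hcαi : ¬ ∃ z ∈ Z, z (r i) = α i := by
          rintro ⟨z₁, hz₁, hz₁i⟩
          obtain ⟨z, hz, hzi⟩ := hci
          apply hP
          refine ⟨(α * z * α⁻¹)⁻¹ * z₁, mul_mem (inv_mem (hNZ α hαY z hz)) hz₁, ?_⟩
          rw [Equiv.Perm.mul_apply, hz₁i]
          have h6 : α i = (α * z * α⁻¹) (α (r i)) := by
            simp only [Equiv.Perm.mul_apply, Equiv.Perm.inv_apply_self]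
            rw [hzi]
          rw [h6, Equiv.Perm.inv_apply_self]
        rw [if_pos hci, if_neg hcαi, add_zero]
        exact (by decide : ∀ a b c d : ZMod 2, a + b = c + d → a + (d + c) = b) _ _ _ _ hwA
      · have hcαi : ∃ z ∈ Z, z (r i) = α i := by
          rcases decD y hyY with h | ⟨z, hz, rfl⟩
          · exact absurd ⟨y, h, hyi⟩ hci
          refine ⟨(α * z * α⁻¹) * (α * α), mul_mem (hNZ α hαY z hz) (hΦZ hα2), ?_⟩
          have h7 : (α * z * α⁻¹) * (α * α) = α * (z * α) := by group
          rw [h7, Equiv.Perm.mul_apply, hyi]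
        rw [if_neg hci, if_pos hcαi, add_zero]
        exact (by decide : ∀ a b c d : ZMod 2, a + b = c + d → a = b + (d + c)) _ _ _ _ hwA
  · -- X-invariance of v₂
    intro β hβ i
    simp only [hcc]
    have hrr : r (β i) = r i := hr_eq β (hXY hβ) i
    rw [hrr]
    by_cases hci : ∃ z ∈ Z, z (r i) = i
    · obtain ⟨z, hz, hzi⟩ := hci
      rw [if_pos ⟨β * z, mul_mem (hXZ hβ) hz, by rw [Equiv.Perm.mul_apply, hzi]⟩,
        if_pos ⟨z, hz, hzi⟩]
    · rw [if_neg ?hneg1, if_neg hci]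
      rintro ⟨z, hz, hzi⟩
      exact hci ⟨β⁻¹ * z, mul_mem (inv_mem (hXZ hβ)) hz,
        by rw [Equiv.Perm.mul_apply, hzi, Equiv.Perm.inv_apply_self]⟩
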